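/- The area of the set of points of ℝ² within ℓ¹-distance r of a rectifiable curve of length P is at most 2rP + 2r². -/

import Mathlib

open MeasureTheory

open ENNReal

def dist1 (p q : ℝ × ℝ) : ℝ := |p.1 - q.1| + |p.2 - q.2|

noncomputable def tmapAux : (ℝ × ℝ) →ₗ[ℝ] (ℝ × ℝ) :=
  LinearMap.prod ((LinearMap.fst ℝ ℝ ℝ) + (LinearMap.snd ℝ ℝ ℝ))
    ((LinearMap.fst ℝ ℝ ℝ) - (LinearMap.snd ℝ ℝ ℝ))

lemma tmapAux_det_abs : |tmapAux.det| = 2 := by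
  have h : tmapAux ∘ₗ tmapAux = (2:ℝ) • LinearMap.id := by
    apply LinearMap.ext; intro z
    show ((z.1+z.2) + (z.1-z.2), (z.1+z.2)-(z.1-z.2)) = (2:ℝ) • z
    simp [Prod.smul_def]; constructor <;> ring
  have h2 := congrArg LinearMap.det h
  rw [LinearMap.det_comp, LinearMap.det_smul, LinearMap.det_id] at h2
  have h3 : |tmapAux.det| * |tmapAux.det| = 4 := by
    rw [← abs_mul, h2]; norm_num
  nlinarith [abs_nonneg tmapAux.det]

lemma diamond_eq_aux (c₁ c₂ ρ₁ ρ₂ : ℝ) :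
    {z : ℝ × ℝ | |z.1 + z.2 - c₁| ≤ ρ₁ ∧ |z.1 - z.2 - c₂| ≤ ρ₂}
      = tmapAux ⁻¹' (Set.Icc (c₁ - ρ₁) (c₁ + ρ₁) ×ˢ Set.Icc (c₂ - ρ₂) (c₂ + ρ₂)) := by
  ext z
  have e1 : (tmapAux z).1 = z.1 + z.2 := rfl
  have e2 : (tmapAux z).2 = z.1 - z.2 := rfl
  simp only [Set.mem_setOf_eq, Set.mem_preimage, Set.mem_prod, Set.mem_Icc, e1, e2, abs_le]
  constructor <;> intro h <;>
    exact ⟨⟨by linarith [h.1.1, h.1.2], by linarith [h.1.1, h.1.2]⟩,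
           ⟨by linarith [h.2.1, h.2.2], by linarith [h.2.1, h.2.2]⟩⟩

lemma diamond_meas_aux (c₁ c₂ ρ₁ ρ₂ : ℝ) :
    MeasurableSet {z : ℝ × ℝ | |z.1 + z.2 - c₁| ≤ ρ₁ ∧ |z.1 - z.2 - c₂| ≤ ρ₂} := by
  rw [diamond_eq_aux]
  exact (measurableSet_Icc.prod measurableSet_Icc).preimage
    tmapAux.continuous_of_finiteDimensional.measurable

lemma diamond_vol_aux (c₁ c₂ ρ₁ ρ₂ : ℝ) (h1 : 0 ≤ ρ₁) (h2 : 0 ≤ ρ₂) :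
    volume {z : ℝ × ℝ | |z.1 + z.2 - c₁| ≤ ρ₁ ∧ |z.1 - z.2 - c₂| ≤ ρ₂}
      = ENNReal.ofReal (2 * ρ₁ * ρ₂) := by
  have hdet : tmapAux.det ≠ 0 := by
    intro h; have h4 := tmapAux_det_abs; rw [h] at h4; simp at h4
  rw [diamond_eq_aux, Measure.addHaar_preimage_linearMap volume hdet]
  rw [Measure.volume_eq_prod, Measure.prod_prod, Real.volume_Icc, Real.volume_Icc]
  have w1 : c₁ + ρ₁ - (c₁ - ρ₁) = 2*ρ₁ := by ring
  have w2 : c₂ + ρ₂ - (c₂ - ρ₂) = 2*ρ₂ := by ring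
  rw [w1, w2, abs_inv, tmapAux_det_abs]
  rw [← ENNReal.ofReal_mul (by positivity), ← ENNReal.ofReal_mul (by norm_num)]
  congr 1
  ring

lemma chain_ie_aux {α : Type*} [MeasurableSpace α] (μ : Measure α) (A : ℕ → Set α)
    (hA : ∀ i, MeasurableSet (A i)) (n : ℕ) :
    (∑ i ∈ Finset.range n, μ (A i ∩ A (i+1))) + μ (⋃ i ∈ Finset.range (n+1), A i)
      ≤ ∑ i ∈ Finset.range (n+1), μ (A i) := by
  induction n with
  | zero => simp
  | succ n ih =>
    have hsub : (⋃ i ∈ Finset.range (n+2), A i)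
        ⊆ (⋃ i ∈ Finset.range (n+1), A i) ∪ (A (n+1) \ A n) := by
      intro x hx
      simp only [Set.mem_iUnion, Finset.mem_range] at hx
      obtain ⟨i, hi, hxi⟩ := hx
      rcases Nat.lt_succ_iff_lt_or_eq.mp hi with h | h
      · exact Or.inl (Set.mem_biUnion (Finset.mem_range.mpr h) hxi)
      · subst h
        by_cases hxn : x ∈ A n
        · exact Or.inl (Set.mem_biUnion (Finset.mem_range.mpr (Nat.lt_succ_self n)) hxn)
        · exact Or.inr ⟨hxi, hxn⟩
    have h1 : μ (⋃ i ∈ Finset.range (n+2), A i)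
        ≤ μ (⋃ i ∈ Finset.range (n+1), A i) + μ (A (n+1) \ A n) :=
      (measure_mono hsub).trans (measure_union_le _ _)
    have h2 : μ (A (n+1) ∩ A n) + μ (A (n+1) \ A n) = μ (A (n+1)) :=
      measure_inter_add_diff _ (hA n)
    rw [Finset.sum_range_succ (fun i => μ (A i ∩ A (i+1))) n,
        Finset.sum_range_succ (fun i => μ (A i)) (n+1)]
    calc (∑ i ∈ Finset.range n, μ (A i ∩ A (i+1))) + μ (A n ∩ A (n+1))
          + μ (⋃ i ∈ Finset.range (n+2), A i)
        ≤ (∑ i ∈ Finset.range n, μ (A i ∩ A (i+1))) + μ (A n ∩ A (n+1))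
          + (μ (⋃ i ∈ Finset.range (n+1), A i) + μ (A (n+1) \ A n)) :=
            add_le_add le_rfl h1
      _ = ((∑ i ∈ Finset.range n, μ (A i ∩ A (i+1))) + μ (⋃ i ∈ Finset.range (n+1), A i))
          + (μ (A n ∩ A (n+1)) + μ (A (n+1) \ A n)) := by ring
      _ ≤ (∑ i ∈ Finset.range (n+1), μ (A i)) + (μ (A n ∩ A (n+1)) + μ (A (n+1) \ A n)) :=
            add_le_add ih le_rfl
      _ = (∑ i ∈ Finset.range (n+1), μ (A i)) + μ (A (n+1)) := by
            rw [Set.inter_comm, h2]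

lemma half1_aux (x y : ℝ) : |x - (x+y)/2| = |y - x|/2 := by
  rw [show x - (x+y)/2 = -((y-x)/2) by ring, abs_neg, abs_div, abs_two]

lemma half2_aux (x y : ℝ) : |y - (x+y)/2| = |y - x|/2 := by
  rw [show y - (x+y)/2 = (y-x)/2 by ring, abs_div, abs_two]

set_option maxHeartbeats 1000000 in
theorem stmt12 (r P : ℝ) (hr : 0 < r) (hP : 0 < P) (γ : ℝ → ℝ × ℝ)
    (hlip : ∀ s ∈ Set.Icc (0:ℝ) 1, ∀ t ∈ Set.Icc (0:ℝ) 1,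
      dist1 (γ s) (γ t) ≤ P * |s - t|) :
    volume {p : ℝ × ℝ | ∃ t ∈ Set.Icc (0:ℝ) 1, dist1 p (γ t) ≤ r} ≤
      ENNReal.ofReal (2*r*P + 2*r^2) := by
  set S := {p : ℝ × ℝ | ∃ t ∈ Set.Icc (0:ℝ) 1, dist1 p (γ t) ≤ r} with hSdef
  set f : ℝ → ℝ := fun t => (γ t).1 + (γ t).2 with hfdef
  set g : ℝ → ℝ := fun t => (γ t).1 - (γ t).2 with hgdef
  have hfl : ∀ s ∈ Set.Icc (0:ℝ) 1, ∀ t ∈ Set.Icc (0:ℝ) 1, |f s - f t| ≤ P * |s - t| := by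
    intro s hs t ht
    have h := hlip s hs t ht
    simp only [dist1] at h
    have h2 : |((γ s).1 - (γ t).1) + ((γ s).2 - (γ t).2)| ≤
        |(γ s).1 - (γ t).1| + |(γ s).2 - (γ t).2| := abs_add_le _ _
    have h3 : f s - f t = ((γ s).1 - (γ t).1) + ((γ s).2 - (γ t).2) := by
      simp only [hfdef]; ring
    rw [h3]; linarith
  have hgl : ∀ s ∈ Set.Icc (0:ℝ) 1, ∀ t ∈ Set.Icc (0:ℝ) 1, |g s - g t| ≤ P * |s - t| := by
    intro s hs t ht
    have h := hlip s hs t ht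
    simp only [dist1] at h
    have h2 : |((γ s).1 - (γ t).1) - ((γ s).2 - (γ t).2)| ≤
        |(γ s).1 - (γ t).1| + |(γ s).2 - (γ t).2| := abs_sub _ _
    have h3 : g s - g t = ((γ s).1 - (γ t).1) - ((γ s).2 - (γ t).2) := by
      simp only [hgdef]; ring
    rw [h3]; linarith
  -- main bound for each m
  have key : ∀ m : ℕ, volume S ≤ ENNReal.ofReal
      (((m:ℝ)+1) * (2*(r + 3*P/(2*((m:ℝ)+1)))^2) - (m:ℝ) * (2*(r + P/((m:ℝ)+1))^2)) := by
    intro m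
    set N : ℝ := (m:ℝ) + 1 with hNdef
    have hN : 0 < N := by positivity
    set ρ : ℝ := r + P/N with hρdef
    have hρ : 0 < ρ := by positivity
    set a : ℕ → ℝ := fun i => f ((i:ℝ)/N) with hadef
    set b : ℕ → ℝ := fun i => g ((i:ℝ)/N) with hbdef
    set D : ℕ → Set (ℝ × ℝ) := fun i =>
      {z : ℝ × ℝ | |z.1 + z.2 - (a i + a (i+1))/2| ≤ |a (i+1) - a i|/2 + ρ ∧
                   |z.1 - z.2 - (b i + b (i+1))/2| ≤ |b (i+1) - b i|/2 + ρ} with hDdef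
    have hIcc : ∀ i : ℕ, i ≤ m + 1 → (i:ℝ)/N ∈ Set.Icc (0:ℝ) 1 := by
      intro i hi
      constructor
      · positivity
      · rw [div_le_one hN]
        have : (i:ℝ) ≤ (m:ℝ) + 1 := by exact_mod_cast hi
        linarith
    have hstepa : ∀ i : ℕ, i ≤ m → |a (i+1) - a i| ≤ P/N := by
      intro i hi
      have h1 := hfl (((i:ℝ)+1)/N) (by
          have := hIcc (i+1) (by omega); push_cast at this ⊢; exact this)
        ((i:ℝ)/N) (hIcc i (by omega))
      have h2 : a (i+1) = f (((i:ℝ)+1)/N) := by simp only [hadef]; push_cast; ring_nf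
      have h3 : |((i:ℝ)+1)/N - (i:ℝ)/N| = 1/N := by
        rw [show ((i:ℝ)+1)/N - (i:ℝ)/N = 1/N by field_simp; ring]
        exact abs_of_pos (by positivity)
      rw [h2]
      calc |f (((i:ℝ)+1)/N) - a i| ≤ P * |((i:ℝ)+1)/N - (i:ℝ)/N| := h1
        _ = P * (1/N) := by rw [h3]
        _ = P/N := by ring
    have hstepb : ∀ i : ℕ, i ≤ m → |b (i+1) - b i| ≤ P/N := by
      intro i hi
      have h1 := hgl (((i:ℝ)+1)/N) (by
          have := hIcc (i+1) (by omega); push_cast at this ⊢; exact this)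
        ((i:ℝ)/N) (hIcc i (by omega))
      have h2 : b (i+1) = g (((i:ℝ)+1)/N) := by simp only [hbdef]; push_cast; ring_nf
      have h3 : |((i:ℝ)+1)/N - (i:ℝ)/N| = 1/N := by
        rw [show ((i:ℝ)+1)/N - (i:ℝ)/N = 1/N by field_simp; ring]
        exact abs_of_pos (by positivity)
      rw [h2]
      calc |g (((i:ℝ)+1)/N) - b i| ≤ P * |((i:ℝ)+1)/N - (i:ℝ)/N| := h1
        _ = P * (1/N) := by rw [h3]
        _ = P/N := by ring
    -- covering
    have hcov : S ⊆ ⋃ i ∈ Finset.range (m+1), D i := by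
      rintro p ⟨t, ht, hd⟩
      simp only [dist1] at hd
      set i : ℕ := min m ⌊t*N⌋₊ with hidef
      have him : i < m + 1 := Nat.lt_succ_of_le (min_le_left _ _)
      have htN0 : 0 ≤ t * N := mul_nonneg ht.1 hN.le
      have hiN : (i:ℝ) ≤ t*N := by
        calc (i:ℝ) ≤ (⌊t*N⌋₊ : ℝ) := by exact_mod_cast min_le_right m _
          _ ≤ t*N := Nat.floor_le htN0
      have hiN2 : t*N ≤ (i:ℝ) + 1 := by
        rcases le_or_gt (⌊t*N⌋₊) m with h | h
        · have hie : i = ⌊t*N⌋₊ := min_eq_right h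
          rw [hie]
          exact (Nat.lt_floor_add_one (t*N)).le
        · have hie : i = m := min_eq_left h.le
          rw [hie]
          calc t*N ≤ 1*N := by
                apply mul_le_mul_of_nonneg_right ht.2 hN.le
            _ = (m:ℝ) + 1 := by rw [one_mul]
      have h0t : (i:ℝ)/N ≤ t := by rw [div_le_iff₀ hN]; exact hiN
      have hIi : (i:ℝ)/N ∈ Set.Icc (0:ℝ) 1 := hIcc i (by omega)
      have htdiff : |t - (i:ℝ)/N| ≤ 1/N := by
        rw [abs_of_nonneg (by linarith)]
        have he : ((i:ℝ)+1)/N - (i:ℝ)/N = 1/N := by field_simp; ring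
        have : t ≤ ((i:ℝ)+1)/N := by rw [le_div_iff₀ hN]; linarith
        linarith
      have hft : |f t - a i| ≤ P/N := by
        calc |f t - a i| ≤ P * |t - (i:ℝ)/N| := hfl t ht _ hIi
          _ ≤ P * (1/N) := by
              apply mul_le_mul_of_nonneg_left htdiff hP.le
          _ = P/N := by ring
      have hgt : |g t - b i| ≤ P/N := by
        calc |g t - b i| ≤ P * |t - (i:ℝ)/N| := hgl t ht _ hIi
          _ ≤ P * (1/N) := by
              apply mul_le_mul_of_nonneg_left htdiff hP.le
          _ = P/N := by ring
      have hpf : |p.1 + p.2 - f t| ≤ r := by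
        have h2 : |(p.1 - (γ t).1) + (p.2 - (γ t).2)| ≤
            |p.1 - (γ t).1| + |p.2 - (γ t).2| := abs_add_le _ _
        have h3 : p.1 + p.2 - f t = (p.1 - (γ t).1) + (p.2 - (γ t).2) := by
          simp only [hfdef]; ring
        rw [h3]; linarith
      have hpg : |p.1 - p.2 - g t| ≤ r := by
        have h2 : |(p.1 - (γ t).1) - (p.2 - (γ t).2)| ≤
            |p.1 - (γ t).1| + |p.2 - (γ t).2| := abs_sub _ _
        have h3 : p.1 - p.2 - g t = (p.1 - (γ t).1) - (p.2 - (γ t).2) := by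
          simp only [hgdef]; ring
        rw [h3]; linarith
      apply Set.mem_biUnion (Finset.mem_range.mpr him)
      constructor
      · have t1 := abs_sub_le (p.1 + p.2) (f t) ((a i + a (i+1))/2)
        have t2 := abs_sub_le (f t) (a i) ((a i + a (i+1))/2)
        have t3 := half1_aux (a i) (a (i+1))
        have t4 := abs_nonneg (a (i+1) - a i)
        simp only [hρdef]
        linarith
      · have t1 := abs_sub_le (p.1 - p.2) (g t) ((b i + b (i+1))/2)
        have t2 := abs_sub_le (g t) (b i) ((b i + b (i+1))/2)
        have t3 := half1_aux (b i) (b (i+1))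
        have t4 := abs_nonneg (b (i+1) - b i)
        simp only [hρdef]
        linarith
    have hDmeas : ∀ i, MeasurableSet (D i) := fun i => diamond_meas_aux _ _ _ _
    have hDvol : ∀ i, volume (D i) =
        ENNReal.ofReal (2 * (|a (i+1) - a i|/2 + ρ) * (|b (i+1) - b i|/2 + ρ)) := by
      intro i
      exact diamond_vol_aux _ _ _ _ (by positivity) (by positivity)
    set Vh : ℝ≥0∞ := ENNReal.ofReal (2*(r + 3*P/(2*N))^2) with hVhdef
    set Vl : ℝ≥0∞ := ENNReal.ofReal (2*(r + P/N)^2) with hVldef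
    have hDhigh : ∀ i ∈ Finset.range (m+1), volume (D i) ≤ Vh := by
      intro i hi
      have hi' : i ≤ m := by simpa [Nat.lt_succ_iff] using hi
      have ha := hstepa i hi'
      have hb := hstepb i hi'
      have ha0 := abs_nonneg (a (i+1) - a i)
      have hb0 := abs_nonneg (b (i+1) - b i)
      rw [hDvol i]
      apply ENNReal.ofReal_le_ofReal
      have hN' : N ≠ 0 := ne_of_gt hN
      have q1 : 3*P/(2*N) = (3/2)*(P/N) := by field_simp
      have e1 : |a (i+1) - a i|/2 + ρ ≤ r + 3*P/(2*N) := by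
        simp only [hρdef]; linarith
      have e2 : |b (i+1) - b i|/2 + ρ ≤ r + 3*P/(2*N) := by
        simp only [hρdef]; linarith
      have w2n : (0:ℝ) ≤ |b (i+1) - b i|/2 + ρ := by positivity
      have hX : (0:ℝ) ≤ r + 3*P/(2*N) := by positivity
      nlinarith [mul_le_mul e1 e2 w2n hX]
    have hDlow : ∀ i ∈ Finset.range m, Vl ≤ volume (D i ∩ D (i+1)) := by
      intro i hi
      have hi' : i < m := Finset.mem_range.mp hi
      set E : Set (ℝ × ℝ) :=
        {z : ℝ × ℝ | |z.1 + z.2 - a (i+1)| ≤ ρ ∧ |z.1 - z.2 - b (i+1)| ≤ ρ} with hEdef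
      have hEvol : volume E = ENNReal.ofReal (2 * ρ * ρ) :=
        diamond_vol_aux _ _ _ _ hρ.le hρ.le
      have sub1 : E ⊆ D i := by
        rintro z ⟨hz1, hz2⟩
        constructor
        · calc |z.1 + z.2 - (a i + a (i+1))/2|
              ≤ |z.1 + z.2 - a (i+1)| + |a (i+1) - (a i + a (i+1))/2| := abs_sub_le _ _ _
            _ = |z.1 + z.2 - a (i+1)| + |a (i+1) - a i|/2 := by rw [half2_aux]
            _ ≤ ρ + |a (i+1) - a i|/2 := add_le_add hz1 le_rfl
            _ = |a (i+1) - a i|/2 + ρ := add_comm _ _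
        · calc |z.1 - z.2 - (b i + b (i+1))/2|
              ≤ |z.1 - z.2 - b (i+1)| + |b (i+1) - (b i + b (i+1))/2| := abs_sub_le _ _ _
            _ = |z.1 - z.2 - b (i+1)| + |b (i+1) - b i|/2 := by rw [half2_aux]
            _ ≤ ρ + |b (i+1) - b i|/2 := add_le_add hz2 le_rfl
            _ = |b (i+1) - b i|/2 + ρ := add_comm _ _
      have sub2 : E ⊆ D (i+1) := by
        rintro z ⟨hz1, hz2⟩
        constructor
        · calc |z.1 + z.2 - (a (i+1) + a (i+1+1))/2|
              ≤ |z.1 + z.2 - a (i+1)| + |a (i+1) - (a (i+1) + a (i+1+1))/2| := abs_sub_le _ _ _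
            _ = |z.1 + z.2 - a (i+1)| + |a (i+1+1) - a (i+1)|/2 := by rw [half1_aux]
            _ ≤ ρ + |a (i+1+1) - a (i+1)|/2 := add_le_add hz1 le_rfl
            _ = |a (i+1+1) - a (i+1)|/2 + ρ := add_comm _ _
        · calc |z.1 - z.2 - (b (i+1) + b (i+1+1))/2|
              ≤ |z.1 - z.2 - b (i+1)| + |b (i+1) - (b (i+1) + b (i+1+1))/2| := abs_sub_le _ _ _
            _ = |z.1 - z.2 - b (i+1)| + |b (i+1+1) - b (i+1)|/2 := by rw [half1_aux]
            _ ≤ ρ + |b (i+1+1) - b (i+1)|/2 := add_le_add hz2 le_rfl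
            _ = |b (i+1+1) - b (i+1)|/2 + ρ := add_comm _ _
      calc Vl = volume E := by rw [hEvol, hVldef]; congr 1; ring
        _ ≤ volume (D i ∩ D (i+1)) := measure_mono (Set.subset_inter sub1 sub2)
    -- combine
    have hchain := chain_ie_aux volume D hDmeas m
    have hsum_low : (m : ℝ≥0∞) * Vl ≤ ∑ i ∈ Finset.range m, volume (D i ∩ D (i+1)) := by
      calc (m : ℝ≥0∞) * Vl = ∑ _i ∈ Finset.range m, Vl := by
            rw [Finset.sum_const, Finset.card_range, nsmul_eq_mul]
        _ ≤ _ := Finset.sum_le_sum hDlow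
    have hsum_high : ∑ i ∈ Finset.range (m+1), volume (D i) ≤ ((m : ℝ≥0∞)+1) * Vh := by
      calc ∑ i ∈ Finset.range (m+1), volume (D i) ≤ ∑ _i ∈ Finset.range (m+1), Vh :=
            Finset.sum_le_sum hDhigh
        _ = ((m : ℝ≥0∞)+1) * Vh := by
            rw [Finset.sum_const, Finset.card_range, nsmul_eq_mul]
            push_cast
            ring
    have hmain : (m : ℝ≥0∞) * Vl + volume S ≤ ((m : ℝ≥0∞)+1) * Vh := by
      calc (m : ℝ≥0∞) * Vl + volume S
          ≤ (∑ i ∈ Finset.range m, volume (D i ∩ D (i+1)))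
            + volume (⋃ i ∈ Finset.range (m+1), D i) :=
            add_le_add hsum_low (measure_mono hcov)
        _ ≤ ∑ i ∈ Finset.range (m+1), volume (D i) := hchain
        _ ≤ ((m : ℝ≥0∞)+1) * Vh := hsum_high
    have hfinal : volume S ≤ ((m : ℝ≥0∞)+1) * Vh - (m : ℝ≥0∞) * Vl :=
      ENNReal.le_sub_of_add_le_left (by
        apply ENNReal.mul_ne_top (by simp) ENNReal.ofReal_ne_top) hmain
    have e1 : ENNReal.ofReal ((m:ℝ)+1) = (m : ℝ≥0∞)+1 := by
      rw [ENNReal.ofReal_add (by positivity) (by norm_num), ENNReal.ofReal_natCast,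
        ENNReal.ofReal_one]
    have e2 : ENNReal.ofReal ((m:ℝ)) = (m : ℝ≥0∞) := ENNReal.ofReal_natCast m
    have hcast1 : ((m : ℝ≥0∞)+1) * Vh = ENNReal.ofReal (((m:ℝ)+1) * (2*(r + 3*P/(2*N))^2)) := by
      rw [hVhdef, ENNReal.ofReal_mul (p := (m:ℝ)+1) (by positivity), e1]
    have hcast2 : (m : ℝ≥0∞) * Vl = ENNReal.ofReal ((m:ℝ) * (2*(r + P/N)^2)) := by
      rw [hVldef, ENNReal.ofReal_mul (p := (m:ℝ)) (by positivity), e2]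
    rw [hcast1, hcast2, ← ENNReal.ofReal_sub _ (by positivity)] at hfinal
    exact hfinal
  -- take the limit
  have hu : ∀ m : ℕ, ((m:ℝ)+1) * (2*(r + 3*P/(2*((m:ℝ)+1)))^2) - (m:ℝ) * (2*(r + P/((m:ℝ)+1))^2)
      = 2*r*P + (5*P^2/2) * (1/((m:ℝ)+1)) + 2*(r + P*(1/((m:ℝ)+1)))^2 := by
    intro m
    have hm : ((m:ℝ)+1) ≠ 0 := by positivity
    field_simp
    ring
  have h0 : Filter.Tendsto (fun m : ℕ => 1/((m:ℝ)+1)) Filter.atTop (nhds 0) :=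
    tendsto_one_div_add_atTop_nhds_zero_nat
  have hcont : Filter.Tendsto (fun x : ℝ => 2*r*P + (5*P^2/2)*x + 2*(r + P*x)^2)
      (nhds 0) (nhds (2*r*P + 2*r^2)) := by
    have hc : Continuous fun x : ℝ => 2*r*P + (5*P^2/2)*x + 2*(r + P*x)^2 := by continuity
    have h2 := hc.tendsto 0
    have h3 : 2*r*P + (5*P^2/2)*(0:ℝ) + 2*(r + P*0)^2 = 2*r*P + 2*r^2 := by ring
    rw [h3] at h2
    exact h2
  have hlim : Filter.Tendsto
      (fun m : ℕ => ENNReal.ofReal (2*r*P + (5*P^2/2) * (1/((m:ℝ)+1)) + 2*(r + P*(1/((m:ℝ)+1)))^2))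
      Filter.atTop (nhds (ENNReal.ofReal (2*r*P + 2*r^2))) :=
    ENNReal.tendsto_ofReal (hcont.comp h0)
  refine ge_of_tendsto hlim (Filter.Eventually.of_forall fun m => ?_)
  rw [← hu m]
  exact key m
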